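/- arXiv:1911.12649 — 3 statements merged into one kernel-verified Lean document; each statement's English description precedes it below -/
import Mathlib

section
/- Let n ≥ 1 and let M ∈ Matₙ(R) be a matrix whose characteristic polynomial is Eisenstein (so M is invertible in Matₙ(F)). If g ∈ GLₙ(F) satisfies g⁻¹·M·g ∈ Matₙ(R), then g = z·h where z ∈ GLₙ(F) commutes with M and h ∈ GLₙ(R). In particular, there exists h ∈ GLₙ(R) such that h⁻¹·M·h = g⁻¹·M·g. -/
open IsLocalRing Polynomial Matrix
set_option maxHeartbeats 1000000

/-- A monic polynomial `x^n + a_{n-1}x^{n-1} + ⋯ + a_0 ∈ R[x]` is Eisenstein if all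
lower coefficients lie in `𝔪` and the constant coefficient is not in `𝔪²`. -/
def IsEisensteinPoly (R : Type*) [CommRing R] [IsLocalRing R] (f : Polynomial R) : Prop :=
  f.Monic ∧ (∀ i < f.natDegree, f.coeff i ∈ maximalIdeal R) ∧
    f.coeff 0 ∉ (maximalIdeal R) ^ 2

/-- companion-type matrix of a polynomial, for size n. -/
noncomputable def auxCompMat {R : Type*} [CommRing R] (n : ℕ) (f : Polynomial R) :
    Matrix (Fin n) (Fin n) R :=
  Matrix.of fun i l => if (l : ℕ) = n - 1 then -(f.coeff (i : ℕ))
    else if (i : ℕ) = (l : ℕ) + 1 then 1 else 0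

/-- Cayley–Hamilton, rearranged. -/
lemma auxCH {R : Type*} [CommRing R] [Nontrivial R] {n : ℕ} (M : Matrix (Fin n) (Fin n) R) :
    M ^ n = -∑ t ∈ Finset.range n, M.charpoly.coeff t • M ^ t := by
  have hdeg : M.charpoly.natDegree = n := by simpa using M.charpoly_natDegree_eq_dim
  have h0 := M.aeval_self_charpoly
  rw [aeval_eq_sum_range, hdeg, Finset.sum_range_succ] at h0
  have hc : M.charpoly.coeff n = 1 := by
    have := (Matrix.charpoly_monic M).coeff_natDegree
    rwa [hdeg] at this
  rw [hc, one_smul] at h0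
  linear_combination (norm := abel) h0

/-- Key lemma: a matrix with Eisenstein charpoly is `GLₙ(R)`-conjugate to the companion
matrix of its characteristic polynomial. -/
lemma auxKey (R : Type*) [CommRing R] [IsDomain R] [IsDiscreteValuationRing R]
    (ϖ : R) (hϖ : Ideal.span {ϖ} = maximalIdeal R)
    (n : ℕ) (hn : 1 ≤ n) (M : Matrix (Fin n) (Fin n) R)
    (hM : IsEisensteinPoly R M.charpoly) :
    ∃ P Pinv : Matrix (Fin n) (Fin n) R, P * Pinv = 1 ∧ Pinv * P = 1 ∧
      M * P = P * auxCompMat n M.charpoly := by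
  classical
  have hdeg : M.charpoly.natDegree = n := by simpa using M.charpoly_natDegree_eq_dim
  set π := IsLocalRing.residue R with hπ
  set A : Matrix (Fin n) (Fin n) (ResidueField R) := M.map π with hA
  have hϖ0 : ϖ ≠ 0 := by
    intro h
    apply IsDiscreteValuationRing.not_a_field R
    rw [← hϖ, h]
    exact Ideal.span_singleton_eq_bot.2 rfl
  have hϖm : ϖ ∈ maximalIdeal R := hϖ ▸ Ideal.mem_span_singleton_self ϖ
  have hmem_dvd : ∀ x : R, x ∈ maximalIdeal R → ϖ ∣ x := by
    intro x hx
    rw [← hϖ, Ideal.mem_span_singleton] at hx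
    exact hx
  have hprime : (maximalIdeal R).IsPrime := (IsLocalRing.maximalIdeal.isMaximal R).isPrime
  -- charpoly reduces to Xⁿ
  have hmap : M.charpoly.map π = X ^ n := by
    ext i
    rw [coeff_map, coeff_X_pow]
    rcases lt_trichotomy i n with h | h | h
    · rw [if_neg (by omega)]
      exact Ideal.Quotient.eq_zero_iff_mem.2 (hM.2.1 i (by rw [hdeg]; exact h))
    · subst h
      rw [if_pos rfl]
      have : M.charpoly.coeff i = 1 := by
        have := hM.1.coeff_natDegree
        rwa [hdeg] at this
      rw [this, RingHom.map_one]
    · rw [if_neg (by omega), coeff_eq_zero_of_natDegree_lt (by rw [hdeg]; exact h), RingHom.map_zero]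
  have hpowmap : ∀ k : ℕ, (M ^ k).map π = A ^ k := fun k => by
    rw [hA, ← RingHom.mapMatrix_apply, ← RingHom.mapMatrix_apply, map_pow]
  have hAn : A ^ n = 0 := by
    have h0 := A.aeval_self_charpoly
    rw [Matrix.charpoly_map, hmap] at h0
    simpa using h0
  -- A^(n-1) ≠ 0
  have hA1 : A ^ (n - 1) ≠ 0 := by
    intro h0
    have hent : ∀ i j, ϖ ∣ (M ^ (n - 1)) i j := by
      intro i j
      apply hmem_dvd
      rw [← Ideal.Quotient.eq_zero_iff_mem]
      have : ((M ^ (n - 1)).map π) i j = 0 := by rw [hpowmap, h0]; rfl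
      exact this
    choose B hB using hent
    have hMB : M ^ (n - 1) = ϖ • (Matrix.of B) := Matrix.ext fun i j => hB i j
    obtain ⟨c, hc⟩ := hmem_dvd _ (hM.2.1 0 (by rw [hdeg]; exact hn))
    have hdet : M.det = (-1) ^ n * (ϖ * c) := by
      rw [← hc]; simpa using M.det_eq_sign_charpoly_coeff
    have h1 : M.det ^ (n - 1) = ϖ ^ n * (Matrix.of B).det := by
      rw [← Matrix.det_pow, hMB, Matrix.det_smul, Fintype.card_fin]
    have h2 : (-1 : R) ^ (n * (n - 1)) * c ^ (n - 1) = ϖ * (Matrix.of B).det := by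
      apply mul_left_cancel₀ (pow_ne_zero (n - 1) hϖ0)
      have hn' : n = (n - 1) + 1 := (Nat.succ_pred_eq_of_pos hn).symm
      calc ϖ ^ (n - 1) * ((-1 : R) ^ (n * (n - 1)) * c ^ (n - 1))
          = ((-1) ^ n * (ϖ * c)) ^ (n - 1) := by rw [mul_pow, mul_pow, ← pow_mul]; ring
        _ = ϖ ^ n * (Matrix.of B).det := by rw [← hdet, h1]
        _ = ϖ ^ (n - 1) * (ϖ * (Matrix.of B).det) := by
            rw [← mul_assoc, ← pow_succ, Nat.sub_add_cancel hn]
    have hcm : c ^ (n - 1) ∈ maximalIdeal R := by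
      have : c ^ (n - 1) = (-1 : R) ^ (n * (n - 1)) * (ϖ * (Matrix.of B).det) := by
        have hsq : ((-1 : R) ^ (n * (n - 1))) * ((-1 : R) ^ (n * (n - 1))) = 1 := by
          rw [← pow_add]
          exact Even.neg_one_pow ⟨n * (n - 1), rfl⟩
        calc c ^ (n - 1) = ((-1 : R) ^ (n * (n - 1)) * (-1 : R) ^ (n * (n - 1))) * c ^ (n - 1) := by
              rw [hsq, one_mul]
          _ = (-1 : R) ^ (n * (n - 1)) * ((-1 : R) ^ (n * (n - 1)) * c ^ (n - 1)) := by ring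
          _ = (-1 : R) ^ (n * (n - 1)) * (ϖ * (Matrix.of B).det) := by rw [h2]
      rw [this]
      exact Ideal.mul_mem_left _ _ (Ideal.mul_mem_right _ _ hϖm)
    rcases Nat.lt_or_ge 1 n with h2n | h1n
    · have hcmem : c ∈ maximalIdeal R := hprime.mem_of_pow_mem _ hcm
      apply hM.2.2
      rw [hc, pow_two]
      exact Ideal.mul_mem_mul hϖm hcmem
    · have hn1 : n = 1 := le_antisymm h1n hn
      have h1m : (1 : R) ∈ maximalIdeal R := by
        rw [hn1] at hcm
        simpa using hcm
      exact (Ideal.ne_top_iff_one _).1 (IsLocalRing.maximalIdeal.isMaximal R).ne_top h1m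
  obtain ⟨i, j, hij⟩ : ∃ i j, (A ^ (n - 1)) i j ≠ 0 := by
    by_contra h
    push_neg at h
    exact hA1 (Matrix.ext fun i j => h i j)
  -- the cyclic-basis matrix
  set P : Matrix (Fin n) (Fin n) R := Matrix.of (fun r l : Fin n => (M ^ (l : ℕ)) r j) with hP
  have hPmap : P.map π = Matrix.of (fun r l : Fin n => (A ^ (l : ℕ)) r j) := by
    ext r l
    show π ((M ^ (l : ℕ)) r j) = (A ^ (l : ℕ)) r j
    rw [← hpowmap]; rfl
  -- det of reduction is nonzero
  have hdetred : (P.map π).det ≠ 0 := by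
    intro hdz
    obtain ⟨c, hc0, hc⟩ := (Matrix.exists_mulVec_eq_zero_iff).2 hdz
    set T : Finset (Fin n) := Finset.univ.filter (fun l => c l ≠ 0) with hT
    have hTne : T.Nonempty := by
      obtain ⟨l, hl⟩ := Function.ne_iff.1 hc0
      exact ⟨l, Finset.mem_filter.2 ⟨Finset.mem_univ l, hl⟩⟩
    set l₀ := T.min' hTne with hl₀
    have hcl₀ : c l₀ ≠ 0 := (Finset.mem_filter.1 (T.min'_mem hTne)).2
    have hmin : ∀ l : Fin n, c l ≠ 0 → l₀ ≤ l := fun l hl =>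
      T.min'_le l (Finset.mem_filter.2 ⟨Finset.mem_univ l, hl⟩)
    have hl₀le : (l₀ : ℕ) ≤ n - 1 := Nat.le_sub_one_of_lt l₀.isLt
    set s := (n - 1) - (l₀ : ℕ) with hs
    rw [hPmap] at hc
    have hrow : ∀ r, ∑ l : Fin n, (A ^ (l : ℕ)) r j * c l = 0 := by
      intro r
      have := congrFun hc r
      simpa [Matrix.mulVec, dotProduct] using this
    have hsum : ∑ l : Fin n, (A ^ (s + (l : ℕ))) i j * c l = 0 := by
      calc ∑ l : Fin n, (A ^ (s + (l : ℕ))) i j * c l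
          = ∑ l : Fin n, (∑ r, (A ^ s) i r * (A ^ (l : ℕ)) r j) * c l := by
            refine Finset.sum_congr rfl fun l _ => ?_
            rw [pow_add, Matrix.mul_apply]
        _ = ∑ r, (A ^ s) i r * ∑ l : Fin n, (A ^ (l : ℕ)) r j * c l := by
            simp_rw [Finset.sum_mul, Finset.mul_sum, mul_assoc]
            exact Finset.sum_comm
        _ = 0 := by simp [hrow]
    have hsingle : ∑ l : Fin n, (A ^ (s + (l : ℕ))) i j * c l = (A ^ (n - 1)) i j * c l₀ := by
      rw [Finset.sum_eq_single l₀]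
      · rw [hs, Nat.sub_add_cancel hl₀le]
      · intro l _ hne
        by_cases hcl : c l = 0
        · rw [hcl, mul_zero]
        · have hlt : (l₀ : ℕ) < (l : ℕ) := by
            have := hmin l hcl
            exact lt_of_le_of_ne (by exact_mod_cast this) (by
              intro h; exact hne (Fin.ext h.symm))
          have hge : n ≤ s + (l : ℕ) := by omega
          have : A ^ (s + (l : ℕ)) = 0 := by
            rw [show s + (l : ℕ) = n + (s + (l : ℕ) - n) by omega, pow_add, hAn, zero_mul]
          rw [this]
          simp
      · intro h
        exact absurd (Finset.mem_univ l₀) h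
    rw [hsingle] at hsum
    rcases mul_eq_zero.1 hsum with h | h
    · exact hij h
    · exact hcl₀ h
  have hdetunit : IsUnit P.det := by
    by_contra hu
    have h1 : P.det ∈ maximalIdeal R := hu
    have h2 : π P.det = 0 := Ideal.Quotient.eq_zero_iff_mem.2 h1
    rw [RingHom.map_det, RingHom.mapMatrix_apply] at h2
    exact hdetred h2
  have hInv : Invertible P := P.invertibleOfIsUnitDet hdetunit
  refine ⟨P, ⅟P, mul_invOf_self P, invOf_mul_self P, ?_⟩
  -- M * P = P * C
  have hCH := auxCH M
  ext r l
  rw [Matrix.mul_apply, Matrix.mul_apply]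
  have hLHS : ∑ t, M r t * P t l = (M ^ ((l : ℕ) + 1)) r j := by
    rw [pow_succ']
    rw [Matrix.mul_apply]
    rfl
  rw [hLHS]
  by_cases hl : (l : ℕ) = n - 1
  · have hln : (l : ℕ) + 1 = n := by omega
    have hentry : (M ^ n) r j = -∑ t : Fin n, M.charpoly.coeff (t : ℕ) * (M ^ (t : ℕ)) r j := by
      rw [hCH, ← Fin.sum_univ_eq_sum_range (fun t => M.charpoly.coeff t • M ^ t) n]
      simp [Matrix.sum_apply]
    have hR : ∑ t, P r t * auxCompMat n M.charpoly t l
        = -∑ t : Fin n, M.charpoly.coeff (t : ℕ) * (M ^ (t : ℕ)) r j := by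
      rw [← Finset.sum_neg_distrib]
      refine Finset.sum_congr rfl fun t _ => ?_
      simp only [auxCompMat, Matrix.of_apply, if_pos hl, hP, mul_neg]
      ring
    rw [hln, hentry, hR]
  · have hlt : (l : ℕ) + 1 < n := by omega
    have hR : ∑ t, P r t * auxCompMat n M.charpoly t l = (M ^ ((l : ℕ) + 1)) r j := by
      rw [Finset.sum_eq_single (⟨(l : ℕ) + 1, hlt⟩ : Fin n)]
      · simp [auxCompMat, hl, hP]
      · intro t _ hne
        simp only [auxCompMat, Matrix.of_apply, if_neg hl]
        rw [if_neg (fun h => hne (Fin.ext h)), mul_zero]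
      · intro h
        exact absurd (Finset.mem_univ _) h
    rw [hR]

lemma auxCharpolyConj {F : Type*} [Field F] {n : ℕ} (g : GL (Fin n) F)
    (A : Matrix (Fin n) (Fin n) F) :
    (((g⁻¹ : GL (Fin n) F) : Matrix (Fin n) (Fin n) F) * A *
      (g : Matrix (Fin n) (Fin n) F)).charpoly = A.charpoly := by
  set φ : Matrix (Fin n) (Fin n) F →+* Matrix (Fin n) (Fin n) F[X] :=
    (Polynomial.C : F →+* F[X]).mapMatrix with hφ
  have hgg : ((g⁻¹ : GL (Fin n) F) : Matrix (Fin n) (Fin n) F) * (g : Matrix (Fin n) (Fin n) F)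
      = 1 := g.inv_mul
  have hs : φ ((g⁻¹ : GL (Fin n) F) : Matrix (Fin n) (Fin n) F) * Matrix.scalar (Fin n) X *
      φ (g : Matrix (Fin n) (Fin n) F) = Matrix.scalar (Fin n) X := by
    rw [← (Matrix.scalar_commute (X : F[X]) (fun r' => Commute.all _ _)
      (φ ((g⁻¹ : GL (Fin n) F) : Matrix (Fin n) (Fin n) F))).eq, mul_assoc,
      ← _root_.map_mul φ, hgg, _root_.map_one φ, mul_one]
  have hconj : charmatrix (((g⁻¹ : GL (Fin n) F) : Matrix (Fin n) (Fin n) F) * A *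
      (g : Matrix (Fin n) (Fin n) F))
      = φ ((g⁻¹ : GL (Fin n) F) : Matrix (Fin n) (Fin n) F) * charmatrix A *
        φ (g : Matrix (Fin n) (Fin n) F) := by
    have hch : ∀ B : Matrix (Fin n) (Fin n) F,
        charmatrix B = Matrix.scalar (Fin n) (X : F[X]) - φ B := fun B => rfl
    rw [hch, hch, _root_.map_mul φ, _root_.map_mul φ, mul_sub, sub_mul, hs]
  have h1 : (φ ((g⁻¹ : GL (Fin n) F) : Matrix (Fin n) (Fin n) F)).det *
      (φ (g : Matrix (Fin n) (Fin n) F)).det = 1 := by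
    rw [← Matrix.det_mul, ← _root_.map_mul φ, hgg, _root_.map_one φ, Matrix.det_one]
  rw [Matrix.charpoly, hconj, Matrix.det_mul, Matrix.det_mul, Matrix.charpoly]
  calc (φ _).det * (charmatrix A).det * (φ _).det
      = (φ ((g⁻¹ : GL (Fin n) F) : Matrix (Fin n) (Fin n) F)).det *
        (φ (g : Matrix (Fin n) (Fin n) F)).det * (charmatrix A).det := by ring
    _ = (charmatrix A).det := by rw [h1, one_mul]

/-- If `M ∈ Matₙ(R)` has Eisenstein characteristic polynomial and
`g ∈ GLₙ(F)` satisfies `g⁻¹·M·g ∈ Matₙ(R)`, then `g = z·h` with `z` commuting with `M`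
and `h ∈ GLₙ(R)`; in particular some `h ∈ GLₙ(R)` satisfies `h⁻¹·M·h = g⁻¹·M·g`. -/
theorem conj_into_matR_of_eisenstein
    (R : Type*) [CommRing R] [IsDomain R] [IsDiscreteValuationRing R]
    (F : Type*) [Field F] [Algebra R F] [IsFractionRing R F]
    (ϖ : R) (hϖ : Ideal.span {ϖ} = maximalIdeal R)
    (n : ℕ) (hn : 1 ≤ n) (M : Matrix (Fin n) (Fin n) R)
    (hM : IsEisensteinPoly R M.charpoly)
    (g : GL (Fin n) F)
    (hg : ∀ i j : Fin n, ∃ r : R,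
      (((g⁻¹ : GL (Fin n) F) : Matrix (Fin n) (Fin n) F) * M.map (algebraMap R F) *
        (g : Matrix (Fin n) (Fin n) F)) i j = algebraMap R F r) :
    ∃ z : GL (Fin n) F,
      (z : Matrix (Fin n) (Fin n) F) * M.map (algebraMap R F) =
        M.map (algebraMap R F) * (z : Matrix (Fin n) (Fin n) F) ∧
      ∃ h hinv : Matrix (Fin n) (Fin n) R, h * hinv = 1 ∧ hinv * h = 1 ∧
        (g : Matrix (Fin n) (Fin n) F) =
          (z : Matrix (Fin n) (Fin n) F) * h.map (algebraMap R F) ∧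
        hinv.map (algebraMap R F) * M.map (algebraMap R F) * h.map (algebraMap R F) =
          ((g⁻¹ : GL (Fin n) F) : Matrix (Fin n) (Fin n) F) * M.map (algebraMap R F) *
            (g : Matrix (Fin n) (Fin n) F) := by
  classical
  set φ := algebraMap R F with hφ
  have hinj : Function.Injective φ := IsFractionRing.injective R F
  set MF := M.map φ with hMF
  choose N hN using hg
  set NR : Matrix (Fin n) (Fin n) R := Matrix.of N with hNR
  have hNmap : NR.map φ =
      ((g⁻¹ : GL (Fin n) F) : Matrix (Fin n) (Fin n) F) * MF *
        (g : Matrix (Fin n) (Fin n) F) :=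
    Matrix.ext fun i j => (hN i j).symm
  have hcp : NR.charpoly = M.charpoly := by
    apply Polynomial.map_injective φ hinj
    rw [← Matrix.charpoly_map NR φ, ← Matrix.charpoly_map M φ, hNmap]
    exact auxCharpolyConj g MF
  have hMN : IsEisensteinPoly R NR.charpoly := hcp ▸ hM
  obtain ⟨P, Pinv, hPP, hPP', hMP⟩ := auxKey R ϖ hϖ n hn M hM
  obtain ⟨Q, Qinv, hQQ, hQQ', hNQ⟩ := auxKey R ϖ hϖ n hn NR hMN
  rw [hcp] at hNQ
  set C := auxCompMat n M.charpoly with hC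
  have hhh : (P * Qinv) * (Q * Pinv) = 1 := by
    rw [mul_assoc, ← mul_assoc Qinv Q Pinv, hQQ', one_mul, hPP]
  have hhh' : (Q * Pinv) * (P * Qinv) = 1 := by
    rw [mul_assoc, ← mul_assoc Pinv P Qinv, hPP', one_mul, hQQ]
  have hconjR : (Q * Pinv) * M * (P * Qinv) = NR := by
    have h1 : Pinv * M * P = C := by
      calc Pinv * M * P = Pinv * (M * P) := by rw [mul_assoc]
        _ = Pinv * (P * C) := by rw [hMP]
        _ = (Pinv * P) * C := by rw [mul_assoc]
        _ = C := by rw [hPP', one_mul]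
    calc (Q * Pinv) * M * (P * Qinv) = Q * (Pinv * M * P) * Qinv := by
          simp only [mul_assoc]
      _ = Q * C * Qinv := by rw [h1]
      _ = NR * Q * Qinv := by rw [← hNQ]
      _ = NR := by rw [mul_assoc, hQQ, mul_one]
  set h := P * Qinv with hh
  set hinv := Q * Pinv with hhi
  have hmapone : (1 : Matrix (Fin n) (Fin n) R).map φ = 1 :=
    Matrix.map_one φ (map_zero φ) (map_one φ)
  have hfin : hinv.map φ * MF * h.map φ =
      ((g⁻¹ : GL (Fin n) F) : Matrix (Fin n) (Fin n) F) * MF *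
        (g : Matrix (Fin n) (Fin n) F) := by
    have e1 : ((hinv * M) * h).map φ = (hinv * M).map φ * h.map φ := Matrix.map_mul
    have e2 : (hinv * M).map φ = hinv.map φ * M.map φ := Matrix.map_mul
    calc hinv.map φ * MF * h.map φ = ((hinv * M) * h).map φ := by
          rw [e1, e2]
      _ = NR.map φ := by rw [hconjR]
      _ = _ := hNmap
  have hu1 : h.map φ * hinv.map φ = 1 := by rw [← Matrix.map_mul, hhh, hmapone]
  have hu2 : hinv.map φ * h.map φ = 1 := by rw [← Matrix.map_mul, hhh', hmapone]
  set hU : GL (Fin n) F := ⟨h.map φ, hinv.map φ, hu1, hu2⟩ with hhU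
  have hz : ((g * hU⁻¹ : GL (Fin n) F) : Matrix (Fin n) (Fin n) F) =
      (g : Matrix (Fin n) (Fin n) F) * hinv.map φ := rfl
  refine ⟨g * hU⁻¹, ?_, h, hinv, hhh, hhh', ?_, hfin⟩
  · rw [hz]
    have e : (g : Matrix (Fin n) (Fin n) F) * (hinv.map φ * MF * h.map φ) * hinv.map φ =
        (g : Matrix (Fin n) (Fin n) F) *
          (((g⁻¹ : GL (Fin n) F) : Matrix (Fin n) (Fin n) F) * MF *
            (g : Matrix (Fin n) (Fin n) F)) * hinv.map φ := by rw [hfin]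
    have lhs : (g : Matrix (Fin n) (Fin n) F) * (hinv.map φ * MF * h.map φ) * hinv.map φ =
        (g : Matrix (Fin n) (Fin n) F) * hinv.map φ * MF := by
      calc (g : Matrix (Fin n) (Fin n) F) * (hinv.map φ * MF * h.map φ) * hinv.map φ
          = (g : Matrix (Fin n) (Fin n) F) * hinv.map φ * MF * (h.map φ * hinv.map φ) := by
            simp only [mul_assoc]
        _ = _ := by rw [hu1, mul_one]
    have rhs : (g : Matrix (Fin n) (Fin n) F) *
        (((g⁻¹ : GL (Fin n) F) : Matrix (Fin n) (Fin n) F) * MF *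
          (g : Matrix (Fin n) (Fin n) F)) * hinv.map φ =
        MF * ((g : Matrix (Fin n) (Fin n) F) * hinv.map φ) := by
      calc (g : Matrix (Fin n) (Fin n) F) *
          (((g⁻¹ : GL (Fin n) F) : Matrix (Fin n) (Fin n) F) * MF *
            (g : Matrix (Fin n) (Fin n) F)) * hinv.map φ
          = ((g : Matrix (Fin n) (Fin n) F) *
              ((g⁻¹ : GL (Fin n) F) : Matrix (Fin n) (Fin n) F)) *
              (MF * ((g : Matrix (Fin n) (Fin n) F) * hinv.map φ)) := by
            simp only [mul_assoc]
        _ = _ := by rw [g.mul_inv, one_mul]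
    calc (g : Matrix (Fin n) (Fin n) F) * hinv.map φ * MF = _ := lhs.symm
      _ = _ := e
      _ = MF * ((g : Matrix (Fin n) (Fin n) F) * hinv.map φ) := rhs
      _ = MF * ((g : Matrix (Fin n) (Fin n) F) * hinv.map φ) := rfl
  · rw [hz, mul_assoc, hu2, mul_one]
end

section
/- Let n ≥ 1 and let M ∈ Matₙ(R) be a matrix whose characteristic polynomial f is Eisenstein. Then M is GLₙ(R)-conjugate to the companion matrix of f: there exists h ∈ GLₙ(R) with h⁻¹·M·h = C(f). -/
open IsLocalRing

/-- The companion matrix of a monic polynomial `f = x^n + a_{n-1}x^{n-1} + ⋯ + a_0`: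
`(i+1, i)`-entries `1`, last column `(i, n)`-entry `-a_{i-1}`, other entries `0`. -/
def companionMatrix {R : Type*} [CommRing R] (n : ℕ) (f : Polynomial R) :
    Matrix (Fin n) (Fin n) R :=
  Matrix.of fun i j => if (i : ℕ) = (j : ℕ) + 1 then 1
    else if (j : ℕ) = n - 1 then -f.coeff i else 0

private lemma det_mem_pow_of_entries_mem {R : Type*} [CommRing R] {n : ℕ} {I : Ideal R}
    (A : Matrix (Fin n) (Fin n) R) (h : ∀ i j, A i j ∈ I) : A.det ∈ I ^ n := by
  rw [Matrix.det_apply]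
  refine Ideal.sum_mem _ fun σ _ => ?_
  have hp : (∏ i, A (σ i) i) ∈ I ^ n := by
    have h2 := Ideal.prod_mem_prod (s := (Finset.univ : Finset (Fin n)))
      (I := fun _ : Fin n => I) (x := fun i => A (σ i) i) (fun i _ => h _ _)
    simpa using h2
  rcases Int.units_eq_one_or (Equiv.Perm.sign σ) with hs | hs <;>
    simp [hs, hp, neg_mem, Units.smul_def]

private lemma pow_not_mem {R : Type*} [CommRing R] [IsDomain R] [IsDiscreteValuationRing R]
    {a : R} {n : ℕ} (hn : 1 ≤ n) (ha : a ∈ maximalIdeal R)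
    (ha2 : a ∉ (maximalIdeal R) ^ 2) : a ^ (n - 1) ∉ (maximalIdeal R) ^ n := by
  obtain ⟨ϖ, hϖ⟩ := IsDiscreteValuationRing.exists_irreducible R
  have hspan : maximalIdeal R = Ideal.span {ϖ} :=
    (IsDiscreteValuationRing.irreducible_iff_uniformizer ϖ).mp hϖ
  rw [hspan, Ideal.span_singleton_pow, Ideal.mem_span_singleton] at ha2 ⊢
  rw [hspan, Ideal.mem_span_singleton] at ha
  obtain ⟨c, rfl⟩ := ha
  have hcu : IsUnit c := by
    by_contra hc
    have hcm : c ∈ maximalIdeal R := (mem_maximalIdeal c).mpr (mem_nonunits_iff.mpr hc)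
    rw [hspan, Ideal.mem_span_singleton] at hcm
    obtain ⟨d, rfl⟩ := hcm
    exact ha2 ⟨d, by ring⟩
  intro hdvd
  rw [mul_pow] at hdvd
  have h1 : ϖ ^ n ∣ ϖ ^ (n - 1) := ((hcu.pow (n - 1)).dvd_mul_right).mp hdvd
  have h2 : ϖ ^ (n - 1) * ϖ ∣ ϖ ^ (n - 1) * 1 := by
    rw [mul_one, ← pow_succ, Nat.sub_add_cancel hn]
    exact h1
  have h3 : ϖ ∣ 1 := (mul_dvd_mul_iff_left (pow_ne_zero (n - 1) hϖ.ne_zero)).mp h2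
  exact hϖ.not_isUnit (isUnit_of_dvd_one h3)

/-- A matrix over `R` whose characteristic polynomial `f` is Eisenstein
is `GLₙ(R)`-conjugate to the companion matrix of `f`. -/
theorem eisenstein_conjugate_to_companion
    (R : Type*) [CommRing R] [IsDomain R] [IsDiscreteValuationRing R]
    (n : ℕ) (hn : 1 ≤ n) (M : Matrix (Fin n) (Fin n) R)
    (hM : IsEisensteinPoly R M.charpoly) :
    ∃ h hinv : Matrix (Fin n) (Fin n) R, h * hinv = 1 ∧ hinv * h = 1 ∧
      hinv * M * h = companionMatrix n M.charpoly := by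
  classical
  obtain ⟨hmonic, hcoeff, h0⟩ := hM
  have hdeg : M.charpoly.natDegree = n := by
    simpa using M.charpoly_natDegree_eq_dim
  have hlead : M.charpoly.coeff n = 1 := by
    have h := hmonic.coeff_natDegree; rwa [hdeg] at h
  -- Cayley-Hamilton
  have hMn : M ^ n = -∑ k ∈ Finset.range n, M.charpoly.coeff k • M ^ k := by
    have h := M.aeval_self_charpoly
    rw [Polynomial.aeval_eq_sum_range, hdeg, Finset.sum_range_succ, hlead, one_smul] at h
    exact (eq_neg_of_add_eq_zero_right h)
  set Mb : Matrix (Fin n) (Fin n) (ResidueField R) := M.map (residue R) with hMb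
  have hpowmap : ∀ e : ℕ, Mb ^ e = (M ^ e).map (residue R) := by
    intro e
    rw [hMb, ← RingHom.mapMatrix_apply, ← map_pow, RingHom.mapMatrix_apply]
  have hentries : ∀ i j, (M ^ n) i j ∈ maximalIdeal R := by
    intro i j
    rw [hMn]
    simp only [Matrix.neg_apply, Matrix.sum_apply, Matrix.smul_apply, smul_eq_mul]
    exact neg_mem (Ideal.sum_mem _ fun kk hkk =>
      Ideal.mul_mem_right _ _ (hcoeff kk (by rw [hdeg]; exact Finset.mem_range.mp hkk)))
  have hMbn : Mb ^ n = 0 := by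
    rw [hpowmap]
    ext i j
    show residue R ((M ^ n) i j) = 0
    exact Ideal.Quotient.eq_zero_iff_mem.mpr (hentries i j)
  have hMbe : ∀ e, n ≤ e → Mb ^ e = 0 := by
    intro e he
    rw [← Nat.sub_add_cancel he, pow_add, hMbn, mul_zero]
  -- Mb ^ (n-1) ≠ 0
  have ha0 : M.charpoly.coeff 0 ∈ maximalIdeal R := hcoeff 0 (by omega)
  have hMb1 : Mb ^ (n - 1) ≠ 0 := by
    intro hz
    have hent : ∀ i j, (M ^ (n - 1)) i j ∈ maximalIdeal R := by
      intro i j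
      have : residue R ((M ^ (n - 1)) i j) = 0 := by
        have := congrFun (congrFun (hpowmap (n - 1) ▸ hz : (M ^ (n-1)).map (residue R) = 0) i) j
        simpa [Matrix.map_apply] using this
      exact Ideal.Quotient.eq_zero_iff_mem.mp this
    have hdet : (M ^ (n - 1)).det ∈ (maximalIdeal R) ^ n :=
      det_mem_pow_of_entries_mem _ hent
    rw [Matrix.det_pow] at hdet
    have hdetM : M.det = (-1) ^ n * M.charpoly.coeff 0 := by
      simpa using M.det_eq_sign_charpoly_coeff
    rw [hdetM, mul_pow, ← pow_mul] at hdet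
    have hmem : (M.charpoly.coeff 0) ^ (n - 1) ∈ (maximalIdeal R) ^ n := by
      rcases neg_one_pow_eq_or R (n * (n - 1)) with hs | hs
      · rwa [hs, one_mul] at hdet
      · rw [hs, neg_one_mul] at hdet
        exact neg_mem_iff.mp hdet
    exact pow_not_mem hn ha0 h0 hmem
  obtain ⟨i₀, j₀, hij⟩ : ∃ i₀ j₀, (Mb ^ (n - 1)) i₀ j₀ ≠ 0 := by
    by_contra hcon
    push_neg at hcon
    exact hMb1 (by ext i j; simpa using hcon i j)
  set H : Matrix (Fin n) (Fin n) R := Matrix.of fun i j => (M ^ (j : ℕ)) i j₀ with hH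
  set Hb : Matrix (Fin n) (Fin n) (ResidueField R) :=
    Matrix.of fun i j => (Mb ^ (j : ℕ)) i j₀ with hHb
  have hHmap : H.map (residue R) = Hb := by
    ext i j
    simp only [Matrix.map_apply, hH, hHb, Matrix.of_apply, hpowmap]
  -- det Hb ≠ 0
  have hdetHb : Hb.det ≠ 0 := by
    intro hz
    obtain ⟨c, hc0, hc⟩ := (Matrix.exists_mulVec_eq_zero_iff).mpr hz
    apply hc0
    have hzero : ∀ m : ℕ, ∀ j : Fin n, (j : ℕ) = m → c j = 0 := by
      intro m
      induction m using Nat.strong_induction_on with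
      | _ m ih =>
        intro j hj
        have hjn : (j : ℕ) < n := j.isLt
        have hkey : ((Mb ^ (n - 1 - m) * Hb).mulVec c) i₀ = 0 := by
          rw [← Matrix.mulVec_mulVec, hc, Matrix.mulVec_zero]
          rfl
        have hterm : ∀ l : Fin n, (Mb ^ (n - 1 - m) * Hb) i₀ l
            = (Mb ^ (n - 1 - m + (l : ℕ))) i₀ j₀ := by
          intro l
          rw [pow_add, Matrix.mul_apply, Matrix.mul_apply]
          rfl
        have hsum : ∑ l : Fin n, (Mb ^ (n - 1 - m + (l : ℕ))) i₀ j₀ * c l = 0 := by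
          simp only [Matrix.mulVec, dotProduct] at hkey
          rw [← hkey]
          exact Finset.sum_congr rfl fun l _ => by rw [hterm l]
        have hsingle : (Mb ^ (n - 1 - m + (j : ℕ))) i₀ j₀ * c j = 0 := by
          rw [← hsum]
          symm
          apply Finset.sum_eq_single_of_mem j (Finset.mem_univ j)
          intro l _ hlj
          have hln : (l : ℕ) < n := l.isLt
          rcases lt_or_gt_of_ne (fun h => hlj (Fin.ext h) : (l : ℕ) ≠ (j : ℕ)) with hlt | hgt
          · rw [ih l (by omega) l rfl, mul_zero]
          · rw [hMbe (n - 1 - m + (l : ℕ)) (by omega)]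
            simp
        have hexp : n - 1 - m + (j : ℕ) = n - 1 := by omega
        rw [hexp] at hsingle
        exact (mul_eq_zero.mp hsingle).resolve_left hij
    funext l
    exact hzero l l rfl
  have hdetH : IsUnit H.det := by
    by_contra hu
    have hm : H.det ∈ maximalIdeal R := (mem_maximalIdeal _).mpr (mem_nonunits_iff.mpr hu)
    apply hdetHb
    rw [← hHmap, ← RingHom.mapMatrix_apply, ← RingHom.map_det]
    exact Ideal.Quotient.eq_zero_iff_mem.mpr hm
  refine ⟨H, H⁻¹, Matrix.mul_nonsing_inv H hdetH, Matrix.nonsing_inv_mul H hdetH, ?_⟩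
  have hMH : M * H = H * companionMatrix n M.charpoly := by
    ext i j
    have hjn : (j : ℕ) < n := j.isLt
    have hlhs : (M * H) i j = (M ^ ((j : ℕ) + 1)) i j₀ := by
      rw [pow_succ', Matrix.mul_apply, Matrix.mul_apply]
      rfl
    rw [hlhs, Matrix.mul_apply]
    by_cases hcase : (j : ℕ) = n - 1
    · have hCt : ∀ t : Fin n, companionMatrix n M.charpoly t j
          = -M.charpoly.coeff t := by
        intro t
        have ht : (t : ℕ) ≠ (j : ℕ) + 1 := by have := t.isLt; omega
        simp only [companionMatrix, Matrix.of_apply]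
        rw [if_neg ht, if_pos hcase]
      have hj1 : (j : ℕ) + 1 = n := by omega
      rw [hj1, hMn]
      calc (-∑ k ∈ Finset.range n, M.charpoly.coeff k • M ^ k) i j₀
          = -∑ k ∈ Finset.range n, M.charpoly.coeff k * (M ^ k) i j₀ := by
            simp [Matrix.sum_apply]
        _ = -∑ t : Fin n, M.charpoly.coeff t * (M ^ (t : ℕ)) i j₀ := by
            rw [Fin.sum_univ_eq_sum_range (fun k => M.charpoly.coeff k * (M ^ k) i j₀)]
        _ = ∑ t : Fin n, H i t * companionMatrix n M.charpoly t j := by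
            rw [← Finset.sum_neg_distrib]
            refine Finset.sum_congr rfl fun t _ => ?_
            rw [hCt t]
            show -(M.charpoly.coeff t * (M ^ (t : ℕ)) i j₀)
              = (M ^ (t : ℕ)) i j₀ * -M.charpoly.coeff t
            ring
    · have hj1 : (j : ℕ) + 1 < n := by omega
      have hs : ∑ t : Fin n, H i t * companionMatrix n M.charpoly t j
          = (M ^ ((j : ℕ) + 1)) i j₀ := by
        rw [Finset.sum_eq_single_of_mem (⟨(j : ℕ) + 1, hj1⟩ : Fin n) (Finset.mem_univ _)]
        · have hone : companionMatrix n M.charpoly ⟨(j : ℕ) + 1, hj1⟩ j = 1 := by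
            simp [companionMatrix]
          rw [hone, mul_one]
          rfl
        · intro t _ ht
          have ht' : (t : ℕ) ≠ (j : ℕ) + 1 := fun h => ht (Fin.ext (by simpa using h))
          simp only [companionMatrix, Matrix.of_apply]
          rw [if_neg ht', if_neg hcase, mul_zero]
      exact hs.symm
  calc H⁻¹ * M * H = H⁻¹ * (M * H) := by rw [Matrix.mul_assoc]
    _ = H⁻¹ * (H * companionMatrix n M.charpoly) := by rw [hMH]
    _ = (H⁻¹ * H) * companionMatrix n M.charpoly := by rw [Matrix.mul_assoc]
    _ = companionMatrix n M.charpoly := by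
        rw [Matrix.nonsing_inv_mul H hdetH, Matrix.one_mul]
end

section
/- Let n ≥ 1 and let M ∈ Matₙ(R) be a matrix whose characteristic polynomial is Eisenstein. Let F[M] ⊆ Matₙ(F) be the F-subalgebra generated by M and let R[M] ⊆ Matₙ(F) be the R-subalgebra generated by M. Then R[M] equals the R-span of 1, M, M², …, M^{n−1}, and an element x ∈ F[M] is integral over R if and only if x ∈ R[M]; that is, R[M] is the integral closure of R in F[M]. -/
open IsLocalRing

open Polynomial

section Aux
variable {R : Type*} [CommRing R] [IsDomain R] [IsDiscreteValuationRing R]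

theorem eis_irred (P : R[X]) (hm : P.Monic) (hd : 0 < P.natDegree)
    (hc : ∀ i < P.natDegree, P.coeff i ∈ maximalIdeal R)
    (h0 : P.coeff 0 ∉ (maximalIdeal R) ^ 2) : Irreducible P := by
  apply Polynomial.irreducible_of_eisenstein_criterion
    (Ideal.IsMaximal.isPrime (maximalIdeal.isMaximal R))
  · rw [hm.leadingCoeff]
    exact fun h => (maximalIdeal.isMaximal R).ne_top (Ideal.eq_top_of_isUnit_mem _ h isUnit_one)
  · intro i hi
    exact hc i (by rwa [degree_eq_natDegree hm.ne_zero, Nat.cast_lt] at hi)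
  · rwa [← natDegree_pos_iff_degree_pos]
  · exact h0
  · exact hm.isPrimitive

theorem max_eq_span_coeff (P : R[X]) (hd : 0 < P.natDegree)
    (hc : ∀ i < P.natDegree, P.coeff i ∈ maximalIdeal R)
    (h0 : P.coeff 0 ∉ (maximalIdeal R) ^ 2) :
    maximalIdeal R = Ideal.span {P.coeff 0} := by
  obtain ⟨ϖ, hϖ⟩ := IsDiscreteValuationRing.exists_irreducible R
  have hm0 : P.coeff 0 ∈ maximalIdeal R := hc 0 hd
  rw [hϖ.maximalIdeal_eq] at hm0 ⊢
  obtain ⟨c, hcw⟩ := Ideal.mem_span_singleton.mp hm0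
  have hcu : IsUnit c := by
    by_contra hcu
    apply h0
    have hcm : c ∈ maximalIdeal R := (mem_maximalIdeal c).mpr hcu
    rw [pow_two, hcw]
    exact Ideal.mul_mem_mul (hϖ.maximalIdeal_eq ▸ Ideal.mem_span_singleton_self ϖ) hcm
  rw [Ideal.span_singleton_eq_span_singleton]
  exact ⟨hcu.unit, by rw [IsUnit.unit_spec, ← hcw]⟩

-- the constant coefficient lies in the ideal generated by the root
theorem coeff_zero_mem_span_root (P : R[X]) :
    algebraMap R (AdjoinRoot P) (P.coeff 0) ∈ Ideal.span {AdjoinRoot.root P} := by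
  have h : (Polynomial.aeval (AdjoinRoot.root P)) P = 0 := by
    rw [AdjoinRoot.aeval_eq, AdjoinRoot.mk_self]
  have h2 : X * P.divX + C (P.coeff 0) = P := X_mul_divX_add P
  have h3 := congrArg (Polynomial.aeval (AdjoinRoot.root P)) h2
  rw [h, map_add, map_mul, aeval_X, aeval_C] at h3
  have : algebraMap R (AdjoinRoot P) (P.coeff 0)
      = -(AdjoinRoot.root P * (Polynomial.aeval (AdjoinRoot.root P)) P.divX) := by
    linear_combination h3
  rw [this]
  exact neg_mem (Ideal.mul_mem_right _ _ (Ideal.subset_span rfl))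
end Aux

section Aux2
set_option linter.unusedSectionVars false
variable {R : Type*} [CommRing R] [IsDomain R] [IsDiscreteValuationRing R]
variable (P : R[X])

/-- quotient map to the residue field -/
noncomputable def resMap (h0 : P.coeff 0 ∈ maximalIdeal R) :
    AdjoinRoot P →+* ResidueField R :=
  AdjoinRoot.lift (residue R) 0
    (by rw [eval₂_at_zero]; exact Ideal.Quotient.eq_zero_iff_mem.mpr h0)

theorem resMap_surjective (h0 : P.coeff 0 ∈ maximalIdeal R) :
    Function.Surjective (resMap P h0) := by
  intro z
  obtain ⟨r, rfl⟩ := IsLocalRing.residue_surjective z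
  exact ⟨AdjoinRoot.of P r, AdjoinRoot.lift_of _⟩

theorem ker_resMap (hd : 0 < P.natDegree)
    (hc : ∀ i < P.natDegree, P.coeff i ∈ maximalIdeal R)
    (h0 : P.coeff 0 ∉ (maximalIdeal R) ^ 2) :
    RingHom.ker (resMap P (hc 0 hd)) = Ideal.span {AdjoinRoot.root P} := by
  apply le_antisymm
  · intro z hz
    obtain ⟨q, rfl⟩ := AdjoinRoot.mk_surjective z
    rw [RingHom.mem_ker, resMap, AdjoinRoot.lift_mk, eval₂_at_zero] at hz
    have hz2 : q.coeff 0 ∈ Ideal.span {P.coeff 0} :=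
      (max_eq_span_coeff P hd hc h0) ▸ (Ideal.Quotient.eq_zero_iff_mem.mp hz)
    obtain ⟨c, hcq⟩ := Ideal.mem_span_singleton.mp hz2
    have h2 : AdjoinRoot.mk P q = AdjoinRoot.root P * AdjoinRoot.mk P q.divX
        + algebraMap R (AdjoinRoot P) c * algebraMap R (AdjoinRoot P) (P.coeff 0) := by
      conv_lhs => rw [← X_mul_divX_add q]
      rw [map_add, map_mul, AdjoinRoot.mk_X, hcq, mul_comm (P.coeff 0) c, map_mul]
      rfl
    rw [h2]
    exact Ideal.add_mem _ (Ideal.mul_mem_right _ _ (Ideal.subset_span rfl))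
      (Ideal.mul_mem_left _ _ (coeff_zero_mem_span_root P))
  · rw [Ideal.span_le, Set.singleton_subset_iff]
    have : resMap P (hc 0 hd) (AdjoinRoot.root P) = 0 := AdjoinRoot.lift_root _
    exact this

theorem span_root_isMaximal (hd : 0 < P.natDegree)
    (hc : ∀ i < P.natDegree, P.coeff i ∈ maximalIdeal R)
    (h0 : P.coeff 0 ∉ (maximalIdeal R) ^ 2) :
    (Ideal.span {AdjoinRoot.root P} : Ideal (AdjoinRoot P)).IsMaximal := by
  have := RingHom.ker_isMaximal_of_surjective (resMap P (hc 0 hd)) (resMap_surjective P (hc 0 hd))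
  rwa [ker_resMap P hd hc h0] at this

theorem adjoinRoot_isLocalRing (hm : P.Monic) (hd : 0 < P.natDegree)
    (hc : ∀ i < P.natDegree, P.coeff i ∈ maximalIdeal R)
    (h0 : P.coeff 0 ∉ (maximalIdeal R) ^ 2) :
    IsLocalRing (AdjoinRoot P) := by
  have hfin : Module.Finite R (AdjoinRoot P) := (AdjoinRoot.powerBasis' hm).finite
  have hint : Algebra.IsIntegral R (AdjoinRoot P) := Algebra.IsIntegral.of_finite R _
  refine IsLocalRing.of_unique_max_ideal ⟨Ideal.span {AdjoinRoot.root P},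
    span_root_isMaximal P hd hc h0, fun Q hQ' => ?_⟩
  have hQ : Q.IsMaximal := hQ'
  have hcomap : (Q.comap (algebraMap R (AdjoinRoot P))).IsMaximal :=
    Ideal.isMaximal_comap_of_isIntegral_of_isMaximal Q
  have hcm : Q.comap (algebraMap R (AdjoinRoot P)) = maximalIdeal R :=
    IsLocalRing.eq_maximalIdeal hcomap
  have hmem : ∀ r ∈ maximalIdeal R, algebraMap R (AdjoinRoot P) r ∈ Q := by
    intro r hr
    rw [← hcm] at hr; exact hr
  -- root ^ natDegree ∈ Q
  have haev : (Polynomial.aeval (AdjoinRoot.root P)) P = 0 := by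
    rw [AdjoinRoot.aeval_eq, AdjoinRoot.mk_self]
  have hsum := congrArg (Polynomial.aeval (AdjoinRoot.root P)) (hm.as_sum)
  rw [haev, map_add, map_pow, aeval_X, map_sum] at hsum
  have hroot : AdjoinRoot.root P ∈ Q := by
    refine hQ.isPrime.mem_of_pow_mem P.natDegree ?_
    have : (AdjoinRoot.root P) ^ P.natDegree =
        -(∑ i ∈ Finset.range P.natDegree,
          (Polynomial.aeval (AdjoinRoot.root P)) (C (P.coeff i) * X ^ i)) := by
      linear_combination -hsum
    rw [this]
    refine neg_mem (Ideal.sum_mem _ fun i hi => ?_)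
    rw [map_mul, aeval_C, map_pow, aeval_X]
    exact Ideal.mul_mem_right _ _ (hmem _ (hc i (Finset.mem_range.mp hi)))
  -- hence Q = span root
  have hle : Ideal.span {AdjoinRoot.root P} ≤ Q := by
    rw [Ideal.span_le, Set.singleton_subset_iff]; exact hroot
  exact ((span_root_isMaximal P hd hc h0).eq_of_le hQ.ne_top hle).symm

theorem adjoinRoot_isPrincipalIdealRing (hm : P.Monic) (hd : 0 < P.natDegree)
    (hc : ∀ i < P.natDegree, P.coeff i ∈ maximalIdeal R)
    (h0 : P.coeff 0 ∉ (maximalIdeal R) ^ 2) :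
    IsPrincipalIdealRing (AdjoinRoot P) := by
  haveI : IsDomain (AdjoinRoot P) := AdjoinRoot.isDomain_of_prime
    (UniqueFactorizationMonoid.irreducible_iff_prime.mp (eis_irred P hm hd hc h0))
  haveI : IsLocalRing (AdjoinRoot P) := adjoinRoot_isLocalRing P hm hd hc h0
  refine ((tfae_of_isNoetherianRing_of_isLocalRing_of_isDomain (AdjoinRoot P)).out 0 4).mpr ?_
  refine ⟨⟨AdjoinRoot.root P, ?_⟩⟩
  rw [← IsLocalRing.eq_maximalIdeal (span_root_isMaximal P hd hc h0)]

end Aux2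

section Key
variable (R : Type*) [CommRing R] [IsDomain R] [IsDiscreteValuationRing R]
variable (F : Type*) [Field F] [Algebra R F] [IsFractionRing R F]
variable (P : R[X])

set_option maxHeartbeats 1000000 in
theorem key_integral_mem (hm : P.Monic) (hd : 0 < P.natDegree)
    (hc : ∀ i < P.natDegree, P.coeff i ∈ maximalIdeal R)
    (h0 : P.coeff 0 ∉ (maximalIdeal R) ^ 2)
    (x : AdjoinRoot (P.map (algebraMap R F))) (hx : IsIntegral R x) :
    x ∈ Algebra.adjoin R {AdjoinRoot.root (P.map (algebraMap R F))} := by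
  revert x
  set P' := P.map (algebraMap R F) with hP'
  intro x hx
  have hφinj : Function.Injective (algebraMap R F) := IsFractionRing.injective R F
  have hm' : P'.Monic := hm.map _
  haveI : IsDomain (AdjoinRoot P) := AdjoinRoot.isDomain_of_prime
    (UniqueFactorizationMonoid.irreducible_iff_prime.mp (eis_irred P hm hd hc h0))
  haveI : Fact (Irreducible P') :=
    ⟨hm.irreducible_iff_irreducible_map_fraction_map.mp (eis_irred P hm hd hc h0)⟩
  haveI : IsPrincipalIdealRing (AdjoinRoot P) := adjoinRoot_isPrincipalIdealRing P hm hd hc h0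
  haveI : IsIntegrallyClosed (AdjoinRoot P) := inferInstance
  -- the R-algebra map σ
  have haev : Polynomial.aeval (AdjoinRoot.root P') P = 0 := by
    rw [← aeval_map_algebraMap F, ← hP', AdjoinRoot.aeval_eq, AdjoinRoot.mk_self]
  set σ : AdjoinRoot P →ₐ[R] AdjoinRoot P' :=
    AdjoinRoot.liftAlgHom P (Algebra.ofId R _) (AdjoinRoot.root P')
      (by rw [Algebra.toRingHom_ofId, ← Polynomial.aeval_def]; exact haev) with hσ
  have hσmk : ∀ q : R[X], σ (AdjoinRoot.mk P q) = AdjoinRoot.mk P' (q.map (algebraMap R F)) := by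
    intro q
    rw [hσ, AdjoinRoot.liftAlgHom_mk, Algebra.toRingHom_ofId, ← Polynomial.aeval_def,
      ← AdjoinRoot.aeval_eq, aeval_map_algebraMap]
  have hσinj : Function.Injective σ := by
    rw [injective_iff_map_eq_zero]
    intro a ha
    obtain ⟨q, rfl⟩ := AdjoinRoot.mk_surjective a
    rw [hσmk, AdjoinRoot.mk_eq_zero] at ha
    rw [AdjoinRoot.mk_eq_zero, ← modByMonic_eq_zero_iff_dvd hm]
    rw [← modByMonic_eq_zero_iff_dvd hm'] at ha
    rw [← Polynomial.map_eq_zero_iff hφinj, Polynomial.map_modByMonic _ hm]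
    exact ha
  letI : Algebra (AdjoinRoot P) (AdjoinRoot P') := σ.toRingHom.toAlgebra
  haveI : IsScalarTower R (AdjoinRoot P) (AdjoinRoot P') :=
    IsScalarTower.of_algebraMap_eq fun r => (σ.commutes r).symm
  haveI : IsFractionRing (AdjoinRoot P) (AdjoinRoot P') := by
    refine (isLocalization_iff _ _).mpr ⟨?_, ?_, ?_⟩
    · rintro ⟨y, hy⟩
      refine isUnit_iff_ne_zero.mpr fun h => ?_
      have hy0 : y ≠ 0 := nonZeroDivisors.ne_zero hy
      exact hy0 (hσinj (by rw [map_zero]; exact h))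
    · intro z
      obtain ⟨q, rfl⟩ := AdjoinRoot.mk_surjective z
      obtain ⟨b, hb⟩ := IsLocalization.integerNormalization_map_to_map (nonZeroDivisors R) q
      have hbne : (b : R) ≠ 0 := nonZeroDivisors.coe_ne_zero b
      have hbS : algebraMap R (AdjoinRoot P) b ≠ 0 := by
        intro h
        apply hbne
        have : Function.Injective (algebraMap R (AdjoinRoot P)) := by
          rw [AdjoinRoot.algebraMap_eq]
          apply AdjoinRoot.of.injective_of_degree_ne_zero
          exact (natDegree_pos_iff_degree_pos.mp hd).ne'
        exact this (by simpa using h)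
      refine ⟨⟨AdjoinRoot.mk P (IsLocalization.integerNormalization (nonZeroDivisors R) q),
        ⟨algebraMap R (AdjoinRoot P) b, mem_nonZeroDivisors_of_ne_zero hbS⟩⟩, ?_⟩
      show AdjoinRoot.mk P' q * (algebraMap _ _ (algebraMap R (AdjoinRoot P) b)) = _
      have h1 : (algebraMap (AdjoinRoot P) (AdjoinRoot P')) (algebraMap R (AdjoinRoot P) b)
          = algebraMap R (AdjoinRoot P') b := (IsScalarTower.algebraMap_apply _ _ _ _).symm
      have h2 : (algebraMap (AdjoinRoot P) (AdjoinRoot P'))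
          (AdjoinRoot.mk P (IsLocalization.integerNormalization (nonZeroDivisors R) q))
          = AdjoinRoot.mk P' ((IsLocalization.integerNormalization (nonZeroDivisors R) q).map
            (algebraMap R F)) := hσmk _
      rw [h1, h2, hb, ← AdjoinRoot.smul_mk, Algebra.smul_def, mul_comm]
    · intro a b h
      exact ⟨1, by simpa using hσinj h⟩
  have hxS : IsIntegral (AdjoinRoot P) x := hx.tower_top
  obtain ⟨y, hy⟩ := IsIntegrallyClosed.isIntegral_iff.mp hxS
  have hytop : y ∈ Algebra.adjoin R {AdjoinRoot.root P} := by
    rw [AdjoinRoot.adjoinRoot_eq_top]; trivial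
  have : x = σ y := hy.symm
  rw [this]
  have hmap := AlgHom.map_adjoin σ {AdjoinRoot.root P}
  have : σ (AdjoinRoot.root P) = AdjoinRoot.root P' := AdjoinRoot.liftAlgHom_root P _ _ haev
  rw [Set.image_singleton, this] at hmap
  rw [← hmap]
  exact Subalgebra.mem_map.mpr ⟨y, hytop, rfl⟩
end Key

set_option maxHeartbeats 2000000 in
/-- If `M ∈ Matₙ(R)` has Eisenstein characteristic polynomial then
`R[M]` equals the `R`-span of `1, M, …, M^{n-1}`, and an element of `F[M]` is integral
over `R` if and only if it lies in `R[M]`. -/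
theorem adjoin_eisenstein_integral_closure
    (R : Type*) [CommRing R] [IsDomain R] [IsDiscreteValuationRing R]
    (F : Type*) [Field F] [Algebra R F] [IsFractionRing R F]
    (n : ℕ) (hn : 1 ≤ n) (M : Matrix (Fin n) (Fin n) R)
    (hM : IsEisensteinPoly R M.charpoly) :
    (Subalgebra.toSubmodule (Algebra.adjoin R {M.map (algebraMap R F)}) =
      Submodule.span R (Set.range fun i : Fin n => (M.map (algebraMap R F)) ^ (i : ℕ))) ∧
    ∀ x ∈ Algebra.adjoin F {M.map (algebraMap R F)},
      (IsIntegral R x ↔ x ∈ Algebra.adjoin R {M.map (algebraMap R F)}) := by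
  obtain ⟨hmonic, hcoeff, h0⟩ := hM
  have hndeg : M.charpoly.natDegree = n := by
    rw [Matrix.charpoly_natDegree_eq_dim, Fintype.card_fin]
  have hd : 0 < M.charpoly.natDegree := by rw [hndeg]; exact hn
  set M' := M.map (algebraMap R F) with hM'
  have hcp : M'.charpoly = M.charpoly.map (algebraMap R F) :=
    Matrix.charpoly_map M (algebraMap R F)
  have haevM' : Polynomial.aeval M' M.charpoly = 0 := by
    rw [← aeval_map_algebraMap F, ← hcp]; exact Matrix.aeval_self_charpoly M'
  have hpart1 : Subalgebra.toSubmodule (Algebra.adjoin R {M'}) =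
      Submodule.span R (Set.range fun i : Fin n => M' ^ (i : ℕ)) := by
    rw [← Submodule.span_range_natDegree_eq_adjoin hmonic haevM']
    congr 1
    ext y
    simp only [Finset.coe_image, Finset.coe_range, Set.mem_image, Set.mem_Iio, Set.mem_range,
      hndeg]
    constructor
    · rintro ⟨k, hk, rfl⟩; exact ⟨⟨k, hk⟩, rfl⟩
    · rintro ⟨i, rfl⟩; exact ⟨i, i.2, rfl⟩
  refine ⟨hpart1, fun x hxF => ⟨fun hx => ?_, fun hx => ?_⟩⟩
  · -- integral → mem
    have haev' : Polynomial.aeval M' (M.charpoly.map (algebraMap R F)) = 0 := by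
      rw [aeval_map_algebraMap]; exact haevM'
    haveI : Fact (Irreducible (M.charpoly.map (algebraMap R F))) :=
      ⟨hmonic.irreducible_iff_irreducible_map_fraction_map.mp
        (eis_irred M.charpoly hmonic hd hcoeff h0)⟩
    haveI : Nonempty (Fin n) := ⟨⟨0, hn⟩⟩
    have hker : ∀ a ∈ Ideal.span ({M.charpoly.map (algebraMap R F)} : Set (Polynomial F)),
        Polynomial.aeval M' a = 0 := by
      intro a ha
      obtain ⟨b, rfl⟩ := Ideal.mem_span_singleton.mp ha
      rw [map_mul, haev', zero_mul]
    set ψ : AdjoinRoot (M.charpoly.map (algebraMap R F)) →ₐ[F] Matrix (Fin n) (Fin n) F :=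
      Ideal.Quotient.liftₐ _ (Polynomial.aeval M') hker with hψ
    have hψmk : ∀ q : Polynomial F, ψ (AdjoinRoot.mk _ q) = Polynomial.aeval M' q :=
      fun q => rfl
    have hψroot : ψ (AdjoinRoot.root _) = M' := by
      rw [← AdjoinRoot.mk_X, hψmk, aeval_X]
    have hψinj : Function.Injective ψ := ψ.toRingHom.injective
    have hxrange : x ∈ (Polynomial.aeval M' : Polynomial F →ₐ[F] _).range := by
      rwa [← Algebra.adjoin_singleton_eq_range_aeval]
    obtain ⟨q, hq⟩ := hxrange
    have hx' : ψ (AdjoinRoot.mk _ q) = x := by rw [hψmk]; exact hq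
    set x' := AdjoinRoot.mk (M.charpoly.map (algebraMap R F)) q with hx'def
    have hx'int : IsIntegral R x' := by
      rw [← isIntegral_algHom_iff (ψ.restrictScalars R) hψinj]
      show IsIntegral R (ψ x')
      rw [hx']
      exact hx
    have hmem := key_integral_mem R F M.charpoly hmonic hd hcoeff h0 x' hx'int
    have hmap := AlgHom.map_adjoin (ψ.restrictScalars R)
      {AdjoinRoot.root (M.charpoly.map (algebraMap R F))}
    rw [Set.image_singleton] at hmap
    have heval : (ψ.restrictScalars R) (AdjoinRoot.root (M.charpoly.map (algebraMap R F)))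
        = M' := hψroot
    rw [heval] at hmap
    rw [← hx', ← hmap]
    exact Subalgebra.mem_map.mpr ⟨x', hmem, rfl⟩
  · exact IsIntegral.of_mem_of_fg (Algebra.adjoin R {M'})
      (hpart1 ▸ Submodule.fg_span (Set.finite_range _)) x hx
end
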